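/- arXiv:2402.04570 — 4 statements merged into one kernel-verified Lean document; each statement's English description precedes it below -/
import Mathlib

section
/- Let X be a nonempty set, K ∈ ℕ, and for each k ∈ {1,…,K} let a_k : X → ℂ, B_k : X → ℝ with B_k(x) > 0 for all x ∈ X, and let f_k : ℝ → ℝ be nondecreasing. Then the supremum over x ∈ X of Σ_{k=1}^K f_k(1 + |a_k(x)|²/B_k(x)) equals the supremum over pairs (x, ν) with x ∈ X and ν ∈ ℂ^K of Σ_{k=1}^K f_k(1 + 2 Re(conj(ν_k) a_k(x)) − |ν_k|² B_k(x)) (as an equality of suprema in the extended reals). -/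
lemma surrogate_le (ν a : ℂ) (b : ℝ) (hb : 0 < b) :
    2 * ((starRingEnd ℂ) ν * a).re - ‖ν‖ ^ 2 * b ≤ ‖a‖ ^ 2 / b := by
  rw [Complex.sq_norm, Complex.sq_norm, Complex.normSq_apply, Complex.normSq_apply,
    le_div_iff₀ hb]
  simp only [Complex.mul_re, Complex.conj_re, Complex.conj_im]
  nlinarith [sq_nonneg (a.re - b * ν.re), sq_nonneg (a.im - b * ν.im)]

lemma surrogate_eq (a : ℂ) (b : ℝ) (hb : 0 < b) :
    2 * ((starRingEnd ℂ) (a / (b : ℂ)) * a).re - ‖a / (b : ℂ)‖ ^ 2 * b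
      = ‖a‖ ^ 2 / b := by
  simp only [Complex.sq_norm, Complex.normSq_apply, Complex.div_re, Complex.div_im,
    Complex.mul_re, Complex.mul_im, Complex.conj_re, Complex.conj_im, Complex.ofReal_re,
    Complex.ofReal_im]
  field_simp
  ring

/-- Quadratic transform for sum-of-functions-of-ratios: the supremum over `x ∈ X` of
`Σ_k f_k(1 + |a_k(x)|²/B_k(x))` equals the supremum over `(x, ν) ∈ X × ℂᴷ` of
`Σ_k f_k(1 + 2 Re(conj(ν_k) a_k(x)) − |ν_k|² B_k(x))`, as suprema in the extended reals. -/
theorem quadratic_transform_sup_eq {X : Type*} [Nonempty X] (K : ℕ)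
    (a : Fin K → X → ℂ) (B : Fin K → X → ℝ) (hB : ∀ k x, 0 < B k x)
    (f : Fin K → ℝ → ℝ) (hf : ∀ k, Monotone (f k)) :
    (⨆ x : X, ((∑ k, f k (1 + ‖a k x‖ ^ 2 / B k x) : ℝ) : EReal)) =
      ⨆ p : X × (Fin K → ℂ),
        ((∑ k, f k (1 + 2 * ((starRingEnd ℂ) (p.2 k) * a k p.1).re -
            ‖p.2 k‖ ^ 2 * B k p.1) : ℝ) : EReal) := by
  apply le_antisymm
  · refine iSup_le fun x => ?_
    refine le_trans (le_of_eq ?_)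
      (le_iSup _ ((x, fun k => a k x / (B k x : ℂ)) : X × (Fin K → ℂ)))
    norm_cast
    refine Finset.sum_congr rfl fun k _ => ?_
    congr 1
    have := surrogate_eq (a k x) (B k x) (hB k x)
    rw [add_sub_assoc, this]
  · refine iSup_le fun p => ?_
    refine le_trans ?_ (le_iSup _ p.1)
    have : (∑ k, f k (1 + 2 * ((starRingEnd ℂ) (p.2 k) * a k p.1).re -
        ‖p.2 k‖ ^ 2 * B k p.1)) ≤
        ∑ k, f k (1 + ‖a k p.1‖ ^ 2 / B k p.1) := by
      refine Finset.sum_le_sum fun k _ => hf k ?_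
      rw [add_sub_assoc]
      exact add_le_add_right (surrogate_le (p.2 k) (a k p.1) (B k p.1) (hB k p.1)) 1
    exact_mod_cast this
end

section
/- Let K ∈ ℕ, and for each k ∈ {1,…,K} let c_k ∈ ℂ and d_k ∈ ℝ with d_k > 0. Define e_k(u) = 1 − 2 Re(u · c_k) + |u|² (|c_k|² + d_k) for u ∈ ℂ. Then the infimum over u ∈ ℂ^K and w ∈ (0, ∞)^K of Σ_{k=1}^K (w_k · e_k(u_k) − ln w_k) equals Σ_{k=1}^K (1 − ln(1 + |c_k|²/d_k)), and it is attained at u_k = conj(c_k)/(|c_k|² + d_k) and w_k = (d_k + |c_k|²)/d_k. -/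
private lemma wmse_term_eq (c : ℂ) (d : ℝ) (hd : 0 < d) :
    let A : ℝ := ‖c‖ ^ 2 + d
    let u : ℂ := (starRingEnd ℂ) c / (A : ℂ)
    let w : ℝ := (d + ‖c‖ ^ 2) / d
    w * (1 - 2 * (u * c).re + ‖u‖ ^ 2 * (‖c‖ ^ 2 + d)) - Real.log w
      = 1 - Real.log (1 + ‖c‖ ^ 2 / d) := by
  intro A u w
  have hA : 0 < A := by positivity
  have huc : (u * c).re = ‖c‖ ^ 2 / A := by
    have : u * c = ((‖c‖ ^ 2 / A : ℝ) : ℂ) := by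
      show (starRingEnd ℂ) c / (A : ℂ) * c = _
      rw [div_mul_eq_mul_div, mul_comm, Complex.mul_conj']
      push_cast
      ring
    rw [this, Complex.ofReal_re]
  have hau : ‖u‖ = ‖c‖ / A := by
    show ‖(starRingEnd ℂ) c / (A : ℂ)‖ = _
    rw [norm_div, Complex.norm_conj, Complex.norm_of_nonneg hA.le]
  have he : 1 - 2 * (u * c).re + ‖u‖ ^ 2 * (‖c‖ ^ 2 + d) = d / A := by
    rw [huc, hau]
    field_simp
    ring
  have hw : w = 1 + ‖c‖ ^ 2 / d := by
    show (d + ‖c‖ ^ 2) / d = _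
    field_simp
  have hwe : w * (d / A) = 1 := by
    show (d + ‖c‖ ^ 2) / d * (d / A) = 1
    have : A = d + ‖c‖ ^ 2 := by simp [A]; ring
    rw [this]; field_simp
  rw [he, hwe, hw]

private lemma wmse_term_ge (c : ℂ) (d : ℝ) (hd : 0 < d) (u : ℂ) (w : ℝ) (hw : 0 < w) :
    1 - Real.log (1 + ‖c‖ ^ 2 / d)
      ≤ w * (1 - 2 * (u * c).re + ‖u‖ ^ 2 * (‖c‖ ^ 2 + d)) - Real.log w := by
  set A : ℝ := ‖c‖ ^ 2 + d with hAdef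
  have hA : 0 < A := by positivity
  have hre : (u * c).re ≤ ‖u‖ * ‖c‖ := by
    calc (u * c).re ≤ ‖u * c‖ := Complex.re_le_norm _
      _ = ‖u‖ * ‖c‖ := norm_mul _ _
  have key : d ≤ A * (1 - 2 * (u * c).re + ‖u‖ ^ 2 * A) := by
    nlinarith [sq_nonneg (A * ‖u‖ - ‖c‖),
      mul_le_mul_of_nonneg_left hre hA.le]
  have he : d / A ≤ 1 - 2 * (u * c).re + ‖u‖ ^ 2 * A :=
    (div_le_iff₀' hA).mpr key
  have hdA : 0 < d / A := div_pos hd hA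
  have hlog : Real.log (w * (d / A)) ≤ w * (d / A) - 1 :=
    Real.log_le_sub_one_of_pos (mul_pos hw hdA)
  rw [Real.log_mul (ne_of_gt hw) (ne_of_gt hdA)] at hlog
  have hAd : 1 + ‖c‖ ^ 2 / d = A / d := by
    rw [hAdef]; field_simp; ring
  have hlog2 : Real.log (A / d) = - Real.log (d / A) := by
    rw [← Real.log_inv]; congr 1; field_simp
  have hwe : w * (d / A) ≤ w * (1 - 2 * (u * c).re + ‖u‖ ^ 2 * A) :=
    mul_le_mul_of_nonneg_left he hw.le
  rw [hAd, hlog2]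
  linarith

/-- WMSE reformulation for sum rate: the infimum over receivers `u ∈ ℂᴷ` and positive
weights `w` of `Σ_k (w_k e_k(u_k) − ln w_k)` equals `Σ_k (1 − ln(1 + |c_k|²/d_k))`,
attained at `u_k = conj(c_k)/(|c_k|² + d_k)` and `w_k = (d_k + |c_k|²)/d_k`. -/
theorem wmse_sum_rate_equiv (K : ℕ) (c : Fin K → ℂ) (d : Fin K → ℝ) (hd : ∀ k, 0 < d k) :
    IsLeast {v : ℝ | ∃ (u : Fin K → ℂ) (w : Fin K → ℝ), (∀ k, 0 < w k) ∧
        v = ∑ k, (w k * (1 - 2 * (u k * c k).re +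
              ‖u k‖ ^ 2 * (‖c k‖ ^ 2 + d k)) -
            Real.log (w k))}
      (∑ k, (1 - Real.log (1 + ‖c k‖ ^ 2 / d k))) ∧
    (let u : Fin K → ℂ := fun k =>
        (starRingEnd ℂ) (c k) / ((‖c k‖ ^ 2 + d k : ℝ) : ℂ);
     let w : Fin K → ℝ := fun k => (d k + ‖c k‖ ^ 2) / d k;
     ∑ k, (w k * (1 - 2 * (u k * c k).re +
            ‖u k‖ ^ 2 * (‖c k‖ ^ 2 + d k)) -
          Real.log (w k))
        = ∑ k, (1 - Real.log (1 + ‖c k‖ ^ 2 / d k))) := by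
  have hEq : ∀ k : Fin K,
      ((d k + ‖c k‖ ^ 2) / d k) *
          (1 - 2 * (((starRingEnd ℂ) (c k) / ((‖c k‖ ^ 2 + d k : ℝ) : ℂ)) * c k).re +
            ‖(starRingEnd ℂ) (c k) / ((‖c k‖ ^ 2 + d k : ℝ) : ℂ)‖ ^ 2 *
              (‖c k‖ ^ 2 + d k)) -
          Real.log ((d k + ‖c k‖ ^ 2) / d k)
        = 1 - Real.log (1 + ‖c k‖ ^ 2 / d k) := fun k =>
    wmse_term_eq (c k) (d k) (hd k)
  refine ⟨⟨⟨fun k => (starRingEnd ℂ) (c k) / ((‖c k‖ ^ 2 + d k : ℝ) : ℂ),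
      fun k => (d k + ‖c k‖ ^ 2) / d k,
      fun k => div_pos (add_pos_of_pos_of_nonneg (hd k) (by positivity)) (hd k), ?_⟩, ?_⟩, ?_⟩
  · exact (Finset.sum_congr rfl fun k _ => hEq k).symm
  · rintro v ⟨u, w, hw, rfl⟩
    exact Finset.sum_le_sum fun k _ => wmse_term_ge (c k) (d k) (hd k) (u k) (w k) (hw k)
  · exact Finset.sum_congr rfl fun k _ => hEq k
end

section
/- Let K ∈ ℕ, and for each k ∈ {1,…,K} let c_k ∈ ℂ and d_k ∈ ℝ with d_k > 0. Define e_k(u) = 1 − 2 Re(u · c_k) + |u|² (|c_k|² + d_k) for u ∈ ℂ. Then the supremum, over all ν ∈ ℂ^K such that 1 + 2 Re(conj(ν_k) c_k) − |ν_k|² d_k > 0 for every k, of Σ_{k=1}^K ln(1 + 2 Re(conj(ν_k) c_k) − |ν_k|² d_k) equals K minus the infimum over u ∈ ℂ^K and w ∈ (0, ∞)^K of Σ_{k=1}^K (w_k · e_k(u_k) − ln w_k); both sides equal Σ_{k=1}^K ln(1 + |c_k|²/d_k). -/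
private lemma qt_key1 (cz : ℂ) (dr : ℝ) (hdr : 0 < dr) :
    1 + 2 * ((starRingEnd ℂ) ((dr)⁻¹ • cz) * cz).re - ‖(dr)⁻¹ • cz‖ ^ 2 * dr
      = 1 + ‖cz‖ ^ 2 / dr := by
  rw [Complex.sq_norm, Complex.sq_norm]
  simp only [Complex.real_smul, map_mul, Complex.mul_re, Complex.normSq_apply,
    Complex.conj_re, Complex.conj_im, Complex.mul_im, Complex.ofReal_re, Complex.ofReal_im,
    Complex.normSq_mul, Complex.normSq_ofReal]
  field_simp
  ring

private lemma qt_key2 (ν cz : ℂ) (dr : ℝ) (hdr : 0 < dr) :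
    2 * ((starRingEnd ℂ) ν * cz).re - ‖ν‖ ^ 2 * dr ≤ ‖cz‖ ^ 2 / dr := by
  rw [Complex.sq_norm, Complex.sq_norm, le_div_iff₀ hdr]
  simp only [Complex.mul_re, Complex.normSq_apply, Complex.conj_re, Complex.conj_im]
  nlinarith [sq_nonneg (ν.re * dr - cz.re), sq_nonneg (ν.im * dr - cz.im), hdr]

private lemma qt_key3 (u cz : ℂ) (dr : ℝ) (hdr : 0 < dr) :
    dr / (‖cz‖ ^ 2 + dr)
      ≤ 1 - 2 * (u * cz).re + ‖u‖ ^ 2 * (‖cz‖ ^ 2 + dr) := by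
  have hs : (0:ℝ) < ‖cz‖ ^ 2 + dr := by positivity
  rw [div_le_iff₀ hs]
  rw [Complex.sq_norm, Complex.sq_norm] at *
  simp only [Complex.mul_re, Complex.normSq_apply]
  nlinarith [sq_nonneg (u.re * (cz.re^2 + cz.im^2 + dr) - cz.re),
    sq_nonneg (u.im * (cz.re^2 + cz.im^2 + dr) + cz.im), hs, sq_nonneg cz.re, sq_nonneg cz.im]

private lemma qt_key5 (u cz : ℂ) (dr : ℝ) (hdr : 0 < dr) (he : 0 < 1 - 2 * (u * cz).re +
      ‖u‖ ^ 2 * (‖cz‖ ^ 2 + dr)) (w : ℝ) (hw : 0 < w) :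
    1 + Real.log (1 - 2 * (u * cz).re + ‖u‖ ^ 2 * (‖cz‖ ^ 2 + dr))
      ≤ w * (1 - 2 * (u * cz).re + ‖u‖ ^ 2 * (‖cz‖ ^ 2 + dr)) - Real.log w := by
  set e := 1 - 2 * (u * cz).re + ‖u‖ ^ 2 * (‖cz‖ ^ 2 + dr)
  have h := Real.log_le_sub_one_of_pos (mul_pos hw he)
  rw [Real.log_mul (ne_of_gt hw) (ne_of_gt he)] at h
  linarith

private lemma qt_key4 (cz : ℂ) (dr : ℝ) (hdr : 0 < dr) :
    1 - 2 * (((‖cz‖ ^ 2 + dr)⁻¹ • (starRingEnd ℂ) cz) * cz).re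
      + ‖(‖cz‖ ^ 2 + dr)⁻¹ • (starRingEnd ℂ) cz‖ ^ 2
        * (‖cz‖ ^ 2 + dr)
      = dr / (‖cz‖ ^ 2 + dr) := by
  set a := ‖cz‖ with ha
  have hs : (0:ℝ) < a ^ 2 + dr := add_pos_of_nonneg_of_pos (sq_nonneg _) hdr
  have hre : ((( a^2 + dr)⁻¹ • (starRingEnd ℂ) cz) * cz).re = (a^2+dr)⁻¹ * a^2 := by
    rw [smul_mul_assoc, Complex.real_smul, Complex.re_ofReal_mul, mul_comm ((starRingEnd ℂ) cz),
      Complex.mul_conj, Complex.ofReal_re, ← Complex.sq_norm]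
  have habs : ‖(a^2+dr)⁻¹ • (starRingEnd ℂ) cz‖ = (a^2+dr)⁻¹ * a := by
    rw [norm_smul, Real.norm_eq_abs, Complex.norm_conj,
      abs_of_pos (inv_pos.mpr hs)]
  rw [hre, habs]
  have hs' := hs.ne'
  field_simp
  ring

/-- Equivalence of the quadratic transform and the WMSE reformulation for sum rate
maximization: the supremum of the quadratic-transform surrogate sum rate equals `K` minus
the infimum of the weighted-MSE objective, and both equal `Σ_k ln(1 + |c_k|²/d_k)`. -/
theorem quadratic_transform_wmse_equiv (K : ℕ) (c : Fin K → ℂ) (d : Fin K → ℝ)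
    (hd : ∀ k, 0 < d k) :
    sSup {v : ℝ | ∃ ν : Fin K → ℂ,
        (∀ k, 0 < 1 + 2 * ((starRingEnd ℂ) (ν k) * c k).re - ‖ν k‖ ^ 2 * d k) ∧
        v = ∑ k, Real.log (1 + 2 * ((starRingEnd ℂ) (ν k) * c k).re -
            ‖ν k‖ ^ 2 * d k)}
      = (K : ℝ) - sInf {v : ℝ | ∃ (u : Fin K → ℂ) (w : Fin K → ℝ), (∀ k, 0 < w k) ∧
          v = ∑ k, (w k * (1 - 2 * (u k * c k).re +
                ‖u k‖ ^ 2 * (‖c k‖ ^ 2 + d k)) -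
              Real.log (w k))} ∧
    sSup {v : ℝ | ∃ ν : Fin K → ℂ,
        (∀ k, 0 < 1 + 2 * ((starRingEnd ℂ) (ν k) * c k).re - ‖ν k‖ ^ 2 * d k) ∧
        v = ∑ k, Real.log (1 + 2 * ((starRingEnd ℂ) (ν k) * c k).re -
            ‖ν k‖ ^ 2 * d k)}
      = ∑ k, Real.log (1 + ‖c k‖ ^ 2 / d k) := by
  have hpos1 : ∀ k, (0:ℝ) < 1 + ‖c k‖ ^ 2 / d k := fun k => by
    have := div_nonneg (sq_nonneg (‖c k‖)) (hd k).le
    linarith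
  -- Sup side
  have hSup : IsGreatest {v : ℝ | ∃ ν : Fin K → ℂ,
      (∀ k, 0 < 1 + 2 * ((starRingEnd ℂ) (ν k) * c k).re - ‖ν k‖ ^ 2 * d k) ∧
      v = ∑ k, Real.log (1 + 2 * ((starRingEnd ℂ) (ν k) * c k).re -
          ‖ν k‖ ^ 2 * d k)}
      (∑ k, Real.log (1 + ‖c k‖ ^ 2 / d k)) := by
    constructor
    · refine ⟨fun k => (d k)⁻¹ • c k, fun k => ?_, ?_⟩
      · rw [qt_key1 (c k) (d k) (hd k)]; exact hpos1 k
      · exact (Finset.sum_congr rfl fun k _ => by rw [qt_key1 (c k) (d k) (hd k)]).symm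
    · rintro v ⟨ν, hν, rfl⟩
      refine Finset.sum_le_sum fun k _ => Real.log_le_log (hν k) ?_
      have := qt_key2 (ν k) (c k) (d k) (hd k)
      linarith
  -- Inf side
  have hInf : IsLeast {v : ℝ | ∃ (u : Fin K → ℂ) (w : Fin K → ℝ), (∀ k, 0 < w k) ∧
      v = ∑ k, (w k * (1 - 2 * (u k * c k).re +
            ‖u k‖ ^ 2 * (‖c k‖ ^ 2 + d k)) -
          Real.log (w k))}
      ((K : ℝ) - ∑ k, Real.log (1 + ‖c k‖ ^ 2 / d k)) := by
    constructor
    · refine ⟨fun k => (‖c k‖ ^ 2 + d k)⁻¹ • (starRingEnd ℂ) (c k),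
        fun k => 1 + ‖c k‖ ^ 2 / d k, hpos1, ?_⟩
      have : ∀ k : Fin K,
          (1 + ‖c k‖ ^ 2 / d k) *
            (1 - 2 * (((‖c k‖ ^ 2 + d k)⁻¹ • (starRingEnd ℂ) (c k)) * c k).re +
              ‖(‖c k‖ ^ 2 + d k)⁻¹ • (starRingEnd ℂ) (c k)‖ ^ 2 *
                (‖c k‖ ^ 2 + d k)) -
            Real.log (1 + ‖c k‖ ^ 2 / d k)
          = 1 - Real.log (1 + ‖c k‖ ^ 2 / d k) := by
        intro k
        rw [qt_key4 (c k) (d k) (hd k)]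
        have hs : (0:ℝ) < ‖c k‖ ^ 2 + d k :=
          add_pos_of_nonneg_of_pos (sq_nonneg _) (hd k)
        have hs' := hs.ne'
        have hd' := (hd k).ne'
        have : (1 + ‖c k‖ ^ 2 / d k) * (d k / (‖c k‖ ^ 2 + d k)) = 1 := by
          field_simp
          ring
        rw [this]
      rw [Finset.sum_congr rfl fun k _ => this k, Finset.sum_sub_distrib,
        Finset.sum_const, Finset.card_univ, Fintype.card_fin, nsmul_eq_mul, mul_one]
    · rintro v ⟨u, w, hw, rfl⟩
      have hK : (K : ℝ) - ∑ k, Real.log (1 + ‖c k‖ ^ 2 / d k)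
          = ∑ k : Fin K, (1 - Real.log (1 + ‖c k‖ ^ 2 / d k)) := by
        rw [Finset.sum_sub_distrib, Finset.sum_const, Finset.card_univ, Fintype.card_fin,
          nsmul_eq_mul, mul_one]
      rw [hK]
      refine Finset.sum_le_sum fun k _ => ?_
      have hs : (0:ℝ) < ‖c k‖ ^ 2 + d k :=
        add_pos_of_nonneg_of_pos (sq_nonneg _) (hd k)
      have he : (0:ℝ) < 1 - 2 * (u k * c k).re +
          ‖u k‖ ^ 2 * (‖c k‖ ^ 2 + d k) := by
        have := qt_key3 (u k) (c k) (d k) (hd k)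
        have : (0:ℝ) < d k / (‖c k‖ ^ 2 + d k) := div_pos (hd k) hs
        linarith [qt_key3 (u k) (c k) (d k) (hd k)]
      have h5 := qt_key5 (u k) (c k) (d k) (hd k) he (w k) (hw k)
      have h3 : Real.log (d k / (‖c k‖ ^ 2 + d k))
          ≤ Real.log (1 - 2 * (u k * c k).re +
            ‖u k‖ ^ 2 * (‖c k‖ ^ 2 + d k)) :=
        Real.log_le_log (div_pos (hd k) hs) (qt_key3 (u k) (c k) (d k) (hd k))
      have hlog : Real.log (d k / (‖c k‖ ^ 2 + d k))
          = - Real.log (1 + ‖c k‖ ^ 2 / d k) := by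
        have hs' := hs.ne'
        have hd' := (hd k).ne'
        have h1 : 1 + ‖c k‖ ^ 2 / d k = (d k / (‖c k‖ ^ 2 + d k))⁻¹ := by
          field_simp
          ring
        rw [h1, Real.log_inv, neg_neg]
      rw [hlog] at h3
      linarith
  rw [hSup.csSup_eq, hInf.csInf_eq]
  constructor
  · ring
  · rfl
end

section
/- Let N, M ∈ ℕ and σ_ε > 0. On a probability space, let Λ be an N×M random matrix and λ an N-dimensional complex random vector such that the NM entries of Λ together with the N entries of λ are mutually independent complex random variables, each with zero mean, finite second moment E[|·|²] = σ_ε², and square-integrable. Let Φ be an N×N diagonal complex matrix with |Φ_{ii}| = 1 for all i, let Ĥ be a deterministic N×M complex matrix, ĥ ∈ ℂ^N and f ∈ ℂ^M deterministic vectors. Then E[ |λᴴ Φ Ĥ f + ĥᴴ Φ Λ f + λᴴ Φ Λ f|² ] = σ_ε² (‖ĥ‖² ‖f‖² + ‖Ĥ f‖²) + N σ_ε⁴ ‖f‖². -/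
open Matrix MeasureTheory ProbabilityTheory

open ComplexConjugate

set_option linter.unusedVariables false
set_option linter.unusedSectionVars false
set_option maxHeartbeats 1000000

section Helpers

variable {Ω : Type*} [MeasurableSpace Ω] {μ : Measure Ω} [IsProbabilityMeasure μ]

lemma myCmul {X Y : Ω → ℂ} (h : IndepFun X Y μ) (hX : AEMeasurable X μ) (hY : AEMeasurable Y μ) :
    ∫ ω, X ω * Y ω ∂μ = (∫ ω, X ω ∂μ) * ∫ ω, Y ω ∂μ := by
  have hP := (indepFun_iff_map_prod_eq_prod_map_map hX hY).1 h
  have hXY : AEMeasurable (fun ω => (X ω, Y ω)) μ := hX.prodMk hY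
  haveI := Measure.isProbabilityMeasure_map hX
  haveI := Measure.isProbabilityMeasure_map hY
  calc ∫ ω, X ω * Y ω ∂μ
      = ∫ p : ℂ × ℂ, p.1 * p.2 ∂(μ.map fun ω => (X ω, Y ω)) :=
        (integral_map hXY ((measurable_fst.mul measurable_snd).aestronglyMeasurable)).symm
    _ = ∫ p : ℂ × ℂ, p.1 * p.2 ∂((μ.map X).prod (μ.map Y)) := by rw [hP]
    _ = (∫ x, x ∂(μ.map X)) * ∫ y, y ∂(μ.map Y) := integral_prod_mul (fun x => x) (fun y => y)
    _ = (∫ ω, X ω ∂μ) * ∫ ω, Y ω ∂μ := by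
        rw [show (∫ x : ℂ, x ∂(μ.map X)) = ∫ ω, X ω ∂μ from
              integral_map hX measurable_id.aestronglyMeasurable,
            show (∫ y : ℂ, y ∂(μ.map Y)) = ∫ ω, Y ω ∂μ from
              integral_map hY measurable_id.aestronglyMeasurable]

lemma myImul {X Y : Ω → ℂ} (h : IndepFun X Y μ) (hX : Integrable X μ) (hY : Integrable Y μ) :
    Integrable (fun ω => X ω * Y ω) μ := by
  have h' : IndepFun (fun ω => ‖X ω‖) (fun ω => ‖Y ω‖) μ := h.comp measurable_norm measurable_norm
  have hb := h'.integrable_mul hX.norm hY.norm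
  exact hb.mono' (hX.1.mul hY.1) (Filter.Eventually.of_forall fun ω => by simp)

lemma myIndep_ae {ι : Type*} [Countable ι] {f f' : ι → Ω → ℂ}
    (h : iIndepFun f μ) (hae : ∀ i, f i =ᵐ[μ] f' i) :
    iIndepFun f' μ := by
  rw [iIndepFun_iff_measure_inter_preimage_eq_mul] at h ⊢
  intro S sets hsets
  have hpre : ∀ i : ι, (f i ⁻¹' sets i : Set Ω) =ᵐ[μ] (f' i ⁻¹' sets i) := fun i => by
    rw [Filter.eventuallyEq_set]
    filter_upwards [hae i] with ω hω
    simp [Set.mem_preimage, hω]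
  have hint : (⋂ i ∈ S, f' i ⁻¹' sets i : Set Ω) =ᵐ[μ] ⋂ i ∈ S, f i ⁻¹' sets i := by
    rw [Filter.eventuallyEq_set]
    filter_upwards [(ae_ball_iff S.countable_toSet).2 fun i _ => hae i] with ω hω
    simp only [Set.mem_iInter, Set.mem_preimage]
    exact ⟨fun h' i hi => by rw [hω i hi]; exact h' i hi, fun h' i hi => by rw [← hω i hi]; exact h' i hi⟩
  rw [measure_congr hint, h S hsets]
  exact Finset.prod_congr rfl fun i _ => measure_congr (hpre i)

lemma mconj : Measurable (starRingEnd ℂ) := Complex.continuous_conj.measurable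

lemma integral_cpx_ofReal {Ω : Type*} [MeasurableSpace Ω] {μ : Measure Ω} (f : Ω → ℝ) :
    ∫ ω, ((f ω : ℝ) : ℂ) ∂μ = ((∫ ω, f ω ∂μ : ℝ) : ℂ) := integral_ofReal

abbrev TIdx (N M : ℕ) := Fin N ⊕ ((Fin N × Fin M) ⊕ (Fin N × Fin M))

def auxX {Ω : Type*} (G : (Fin N × Fin M) ⊕ Fin N → Ω → ℂ) : TIdx N M → Ω → ℂ :=
  Sum.elim (fun i ω => conj (G (Sum.inr i) ω))
    (Sum.elim (fun p ω => G (Sum.inl p) ω)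
      (fun p ω => conj (G (Sum.inr p.1) ω) * G (Sum.inl p) ω))

def auxa (c : Fin N → ℂ) (d e : Fin N × Fin M → ℂ) : TIdx N M → ℂ :=
  Sum.elim c (Sum.elim d e)

def auxv (N M : ℕ) (σε : ℝ) : TIdx N M → ℝ :=
  Sum.elim (fun _ => σε ^ 2) (Sum.elim (fun _ => σε ^ 2) (fun _ => σε ^ 4))

@[simp] lemma auxX_inl {Ω : Type*} (G : (Fin N × Fin M) ⊕ Fin N → Ω → ℂ) (i : Fin N) :
    auxX G (Sum.inl i) = fun ω => conj (G (Sum.inr i) ω) := rfl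
@[simp] lemma auxX_inrl {Ω : Type*} (G : (Fin N × Fin M) ⊕ Fin N → Ω → ℂ) (p : Fin N × Fin M) :
    auxX G (Sum.inr (Sum.inl p)) = fun ω => G (Sum.inl p) ω := rfl
@[simp] lemma auxX_inrr {Ω : Type*} (G : (Fin N × Fin M) ⊕ Fin N → Ω → ℂ) (p : Fin N × Fin M) :
    auxX G (Sum.inr (Sum.inr p)) = fun ω => conj (G (Sum.inr p.1) ω) * G (Sum.inl p) ω := rfl
@[simp] lemma auxa_inl (c : Fin N → ℂ) (d e : Fin N × Fin M → ℂ) (i : Fin N) :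
    auxa c d e (Sum.inl i) = c i := rfl
@[simp] lemma auxa_inrl (c : Fin N → ℂ) (d e : Fin N × Fin M → ℂ) (p : Fin N × Fin M) :
    auxa c d e (Sum.inr (Sum.inl p)) = d p := rfl
@[simp] lemma auxa_inrr (c : Fin N → ℂ) (d e : Fin N × Fin M → ℂ) (p : Fin N × Fin M) :
    auxa c d e (Sum.inr (Sum.inr p)) = e p := rfl
@[simp] lemma auxv_inl (N M : ℕ) (σε : ℝ) (i : Fin N) :
    auxv N M σε (Sum.inl i) = σε ^ 2 := rfl
@[simp] lemma auxv_inrl (N M : ℕ) (σε : ℝ) (p : Fin N × Fin M) :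
    auxv N M σε (Sum.inr (Sum.inl p)) = σε ^ 2 := rfl
@[simp] lemma auxv_inrr (N M : ℕ) (σε : ℝ) (p : Fin N × Fin M) :
    auxv N M σε (Sum.inr (Sum.inr p)) = σε ^ 4 := rfl

lemma aux (N M : ℕ) (σε : ℝ)
    (G : (Fin N × Fin M) ⊕ Fin N → Ω → ℂ)
    (hmeas : ∀ idx, Measurable (G idx))
    (hindep : iIndepFun G μ)
    (hL2 : ∀ idx, MemLp (G idx) 2 μ)
    (hmean : ∀ idx, ∫ ω, G idx ω ∂μ = 0)
    (hvar : ∀ idx, ∫ ω, ‖G idx ω‖ ^ 2 ∂μ = σε ^ 2) :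
    ∀ (c : Fin N → ℂ) (d e : Fin N × Fin M → ℂ),
    ∫ ω, ‖∑ i, c i * conj (G (Sum.inr i) ω)
        + (∑ p, d p * G (Sum.inl p) ω
        + ∑ p, e p * (conj (G (Sum.inr p.1) ω) * G (Sum.inl p) ω))‖ ^ 2 ∂μ
      = σε ^ 2 * ∑ i, ‖c i‖ ^ 2 + σε ^ 2 * ∑ p, ‖d p‖ ^ 2
        + σε ^ 4 * ∑ p, ‖e p‖ ^ 2 := by
  intro c d e
  -- basic integrabilities and moments
  have hInt1 : ∀ idx, Integrable (G idx) μ := fun idx => (hL2 idx).integrable one_le_two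
  have hmc : ∀ idx, Measurable fun ω => conj (G idx ω) := fun idx => mconj.comp (hmeas idx)
  have hIntc : ∀ idx, Integrable (fun ω => conj (G idx ω)) μ := fun idx =>
    (hInt1 idx).norm.mono' (hmc idx).aestronglyMeasurable
      (Filter.Eventually.of_forall fun ω => by simp)
  have hE0c : ∀ idx, ∫ ω, conj (G idx ω) ∂μ = 0 := fun idx => by
    rw [integral_conj, hmean idx, map_zero]
  have hEsq : ∀ idx, ∫ ω, G idx ω * conj (G idx ω) ∂μ = ((σε ^ 2 : ℝ) : ℂ) := fun idx => by
    have h1 : ∀ ω, G idx ω * conj (G idx ω) = ((‖G idx ω‖ ^ 2 : ℝ) : ℂ) := fun ω => by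
      rw [Complex.mul_conj, Complex.sq_norm]
    simp_rw [h1]
    rw [integral_cpx_ofReal, hvar idx]
  have hsqInt : ∀ idx, Integrable (fun ω => G idx ω * conj (G idx ω)) μ := fun idx => by
    have h2 : Integrable (fun ω => ‖G idx ω‖ ^ 2) μ := (hL2 idx).norm.integrable_sq
    exact h2.mono' ((hmeas idx).mul (hmc idx)).aestronglyMeasurable
      (Filter.Eventually.of_forall fun ω => by
        simp [norm_mul, sq])
  -- products over (possibly equal) indices
  have hIprod : ∀ A B, Integrable (fun ω => G A ω * conj (G B ω)) μ := by
    intro A B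
    rcases eq_or_ne A B with rfl | hAB
    · exact hsqInt A
    · exact myImul ((hindep.indepFun hAB).comp measurable_id mconj) (hInt1 A) (hIntc B)
  have hIprod' : ∀ A B, Integrable (fun ω => conj (G A ω) * G B ω) μ := by
    intro A B
    have h1 : (fun ω => conj (G A ω) * G B ω) = fun ω => G B ω * conj (G A ω) :=
      funext fun ω => mul_comm _ _
    rw [h1]; exact hIprod B A
  have hVprod : ∀ A B, ∫ ω, G A ω * conj (G B ω) ∂μ
      = if A = B then ((σε ^ 2 : ℝ) : ℂ) else 0 := by
    intro A B
    rcases eq_or_ne A B with rfl | hAB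
    · simp [hEsq A]
    · rw [if_neg hAB,
        myCmul (X := G A) (Y := fun ω => conj (G B ω))
          ((hindep.indepFun hAB).comp measurable_id mconj) (hmeas A).aemeasurable
          (hmc B).aemeasurable, hmean A, zero_mul]
  have hVprod' : ∀ A B, ∫ ω, conj (G A ω) * G B ω ∂μ
      = if A = B then ((σε ^ 2 : ℝ) : ℂ) else 0 := by
    intro A B
    have h1 : (fun ω => conj (G A ω) * G B ω) = fun ω => G B ω * conj (G A ω) :=
      funext fun ω => mul_comm _ _
    rw [h1, hVprod B A]
    rcases eq_or_ne A B with rfl | hAB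
    · simp
    · rw [if_neg hAB, if_neg (Ne.symm hAB)]
  -- pair-against-pair factorization
  have key22V : ∀ (A B C D : (Fin N × Fin M) ⊕ Fin N), A ≠ C → A ≠ D → B ≠ C → B ≠ D →
      ∀ (F H : ℂ × ℂ → ℂ), Measurable F → Measurable H →
      ∫ ω, F (G A ω, G B ω) * H (G C ω, G D ω) ∂μ
        = (∫ ω, F (G A ω, G B ω) ∂μ) * ∫ ω, H (G C ω, G D ω) ∂μ := by
    intro A B C D hAC hAD hBC hBD F H hF hH
    exact myCmul (X := fun ω => F (G A ω, G B ω)) (Y := fun ω => H (G C ω, G D ω))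
      ((hindep.indepFun_prodMk_prodMk hmeas A B C D hAC hAD hBC hBD).comp hF hH)
      (hF.comp ((hmeas A).prodMk (hmeas B))).aemeasurable
      (hH.comp ((hmeas C).prodMk (hmeas D))).aemeasurable
  have key22I : ∀ (A B C D : (Fin N × Fin M) ⊕ Fin N), A ≠ C → A ≠ D → B ≠ C → B ≠ D →
      ∀ (F H : ℂ × ℂ → ℂ), Measurable F → Measurable H →
      Integrable (fun ω => F (G A ω, G B ω)) μ → Integrable (fun ω => H (G C ω, G D ω)) μ →
      Integrable (fun ω => F (G A ω, G B ω) * H (G C ω, G D ω)) μ := by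
    intro A B C D hAC hAD hBC hBD F H hF hH hFI hHI
    exact myImul (X := fun ω => F (G A ω, G B ω)) (Y := fun ω => H (G C ω, G D ω))
      ((hindep.indepFun_prodMk_prodMk hmeas A B C D hAC hAD hBC hBD).comp hF hH)
      hFI hHI

  -- zero-product helpers for distinct indices
  have hV00 : ∀ A B, A ≠ B → ∫ ω, G A ω * G B ω ∂μ = 0 := by
    intro A B hAB
    rw [myCmul (X := G A) (Y := G B) (hindep.indepFun hAB) (hmeas A).aemeasurable
      (hmeas B).aemeasurable, hmean A, zero_mul]
  have hVcc : ∀ A B, A ≠ B → ∫ ω, conj (G A ω) * conj (G B ω) ∂μ = 0 := by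
    intro A B hAB
    rw [myCmul (X := fun ω => conj (G A ω)) (Y := fun ω => conj (G B ω))
      ((hindep.indepFun hAB).comp mconj mconj) (hmc A).aemeasurable
      (hmc B).aemeasurable, hE0c A, zero_mul]
  have hI00 : ∀ A B, A ≠ B → Integrable (fun ω => G A ω * G B ω) μ := fun A B hAB =>
    myImul (hindep.indepFun hAB) (hInt1 A) (hInt1 B)
  have hIcc : ∀ A B, A ≠ B → Integrable (fun ω => conj (G A ω) * conj (G B ω)) μ :=
    fun A B hAB => myImul ((hindep.indepFun hAB).comp mconj mconj) (hIntc A) (hIntc B)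
  -- the central moment computation, case by case
  have claim : ∀ t t' : TIdx N M,
      Integrable (fun ω => auxX G t ω * conj (auxX G t' ω)) μ ∧
      ∫ ω, auxX G t ω * conj (auxX G t' ω) ∂μ
        = if t = t' then ((auxv N M σε t : ℝ) : ℂ) else 0 := by
    rintro (i | p | p) (i' | p' | p')
    · -- (A, A)
      have h1 : (fun ω => auxX G (Sum.inl i) ω * conj (auxX G (Sum.inl i') ω))
          = fun ω => conj (G (Sum.inr i) ω) * G (Sum.inr i') ω := by
        funext ω; simp
      refine ⟨by rw [h1]; exact hIprod' _ _, ?_⟩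
      rw [h1, hVprod']
      by_cases h : i = i' <;> simp [h]
    · -- (A, B)
      have h1 : (fun ω => auxX G (Sum.inl i) ω * conj (auxX G (Sum.inr (Sum.inl p')) ω))
          = fun ω => conj (G (Sum.inr i) ω) * conj (G (Sum.inl p') ω) := by
        funext ω; simp
      refine ⟨by rw [h1]; exact hIcc _ _ (by simp), ?_⟩
      rw [h1, hVcc _ _ (by simp)]
      simp
    · -- (A, C)
      have h1 : (fun ω => auxX G (Sum.inl i) ω * conj (auxX G (Sum.inr (Sum.inr p')) ω))
          = fun ω => (conj (G (Sum.inr i) ω) * G (Sum.inr p'.1) ω)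
              * conj (G (Sum.inl p') ω) := by
        funext ω; simp; ring
      have hF : Measurable fun q : ℂ × ℂ => conj q.1 * q.2 :=
        (mconj.comp measurable_fst).mul measurable_snd
      have hH : Measurable fun q : ℂ × ℂ => conj q.1 := mconj.comp measurable_fst
      refine ⟨?_, ?_⟩
      · rw [h1]
        exact key22I (Sum.inr i) (Sum.inr p'.1) (Sum.inl p') (Sum.inl p') (by simp) (by simp) (by simp) (by simp)
          (fun q => conj q.1 * q.2) (fun q => conj q.1) hF hH (hIprod' _ _) (hIntc _)
      · have hv : ∫ ω, (conj (G (Sum.inr i) ω) * G (Sum.inr p'.1) ω)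
              * conj (G (Sum.inl p') ω) ∂μ
            = (∫ ω, conj (G (Sum.inr i) ω) * G (Sum.inr p'.1) ω ∂μ)
              * ∫ ω, conj (G (Sum.inl p') ω) ∂μ :=
          key22V (Sum.inr i) (Sum.inr p'.1) (Sum.inl p') (Sum.inl p') (by simp) (by simp) (by simp) (by simp)
            (fun q => conj q.1 * q.2) (fun q => conj q.1) hF hH
        rw [h1, hv, hE0c, mul_zero]
        simp
    · -- (B, A)
      have h1 : (fun ω => auxX G (Sum.inr (Sum.inl p)) ω * conj (auxX G (Sum.inl i') ω))
          = fun ω => G (Sum.inl p) ω * G (Sum.inr i') ω := by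
        funext ω; simp
      refine ⟨by rw [h1]; exact hI00 _ _ (by simp), ?_⟩
      rw [h1, hV00 _ _ (by simp)]
      simp
    · -- (B, B)
      have h1 : (fun ω => auxX G (Sum.inr (Sum.inl p)) ω * conj (auxX G (Sum.inr (Sum.inl p')) ω))
          = fun ω => G (Sum.inl p) ω * conj (G (Sum.inl p') ω) := by
        funext ω; simp
      refine ⟨by rw [h1]; exact hIprod _ _, ?_⟩
      rw [h1, hVprod]
      by_cases h : p = p' <;> simp [h]
    · -- (B, C)
      have h1 : (fun ω => auxX G (Sum.inr (Sum.inl p)) ω * conj (auxX G (Sum.inr (Sum.inr p')) ω))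
          = fun ω => (G (Sum.inl p) ω * conj (G (Sum.inl p') ω)) * G (Sum.inr p'.1) ω := by
        funext ω; simp; ring
      have hF : Measurable fun q : ℂ × ℂ => q.1 * conj q.2 :=
        measurable_fst.mul (mconj.comp measurable_snd)
      have hH : Measurable fun q : ℂ × ℂ => q.1 := measurable_fst
      refine ⟨?_, ?_⟩
      · rw [h1]
        exact key22I (Sum.inl p) (Sum.inl p') (Sum.inr p'.1) (Sum.inr p'.1) (by simp) (by simp) (by simp) (by simp)
          (fun q => q.1 * conj q.2) (fun q => q.1) hF hH (hIprod _ _) (hInt1 _)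
      · have hv : ∫ ω, (G (Sum.inl p) ω * conj (G (Sum.inl p') ω)) * G (Sum.inr p'.1) ω ∂μ
            = (∫ ω, G (Sum.inl p) ω * conj (G (Sum.inl p') ω) ∂μ) * ∫ ω, G (Sum.inr p'.1) ω ∂μ :=
          key22V (Sum.inl p) (Sum.inl p') (Sum.inr p'.1) (Sum.inr p'.1) (by simp) (by simp) (by simp) (by simp)
            (fun q => q.1 * conj q.2) (fun q => q.1) hF hH
        rw [h1, hv, hmean, mul_zero]
        simp
    · -- (C, A)
      have h1 : (fun ω => auxX G (Sum.inr (Sum.inr p)) ω * conj (auxX G (Sum.inl i') ω))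
          = fun ω => (conj (G (Sum.inr p.1) ω) * G (Sum.inr i') ω) * G (Sum.inl p) ω := by
        funext ω; simp; ring
      have hF : Measurable fun q : ℂ × ℂ => conj q.1 * q.2 :=
        (mconj.comp measurable_fst).mul measurable_snd
      have hH : Measurable fun q : ℂ × ℂ => q.1 := measurable_fst
      refine ⟨?_, ?_⟩
      · rw [h1]
        exact key22I (Sum.inr p.1) (Sum.inr i') (Sum.inl p) (Sum.inl p) (by simp) (by simp) (by simp) (by simp)
          (fun q => conj q.1 * q.2) (fun q => q.1) hF hH (hIprod' _ _) (hInt1 _)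
      · have hv : ∫ ω, (conj (G (Sum.inr p.1) ω) * G (Sum.inr i') ω) * G (Sum.inl p) ω ∂μ
            = (∫ ω, conj (G (Sum.inr p.1) ω) * G (Sum.inr i') ω ∂μ) * ∫ ω, G (Sum.inl p) ω ∂μ :=
          key22V (Sum.inr p.1) (Sum.inr i') (Sum.inl p) (Sum.inl p) (by simp) (by simp) (by simp) (by simp)
            (fun q => conj q.1 * q.2) (fun q => q.1) hF hH
        rw [h1, hv, hmean, mul_zero]
        simp
    · -- (C, B)
      have h1 : (fun ω => auxX G (Sum.inr (Sum.inr p)) ω * conj (auxX G (Sum.inr (Sum.inl p')) ω))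
          = fun ω => (G (Sum.inl p) ω * conj (G (Sum.inl p') ω)) * conj (G (Sum.inr p.1) ω) := by
        funext ω; simp; ring
      have hF : Measurable fun q : ℂ × ℂ => q.1 * conj q.2 :=
        measurable_fst.mul (mconj.comp measurable_snd)
      have hH : Measurable fun q : ℂ × ℂ => conj q.1 := mconj.comp measurable_fst
      refine ⟨?_, ?_⟩
      · rw [h1]
        exact key22I (Sum.inl p) (Sum.inl p') (Sum.inr p.1) (Sum.inr p.1) (by simp) (by simp) (by simp) (by simp)
          (fun q => q.1 * conj q.2) (fun q => conj q.1) hF hH (hIprod _ _) (hIntc _)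
      · have hv : ∫ ω, (G (Sum.inl p) ω * conj (G (Sum.inl p') ω)) * conj (G (Sum.inr p.1) ω) ∂μ
            = (∫ ω, G (Sum.inl p) ω * conj (G (Sum.inl p') ω) ∂μ)
              * ∫ ω, conj (G (Sum.inr p.1) ω) ∂μ :=
          key22V (Sum.inl p) (Sum.inl p') (Sum.inr p.1) (Sum.inr p.1) (by simp) (by simp) (by simp) (by simp)
            (fun q => q.1 * conj q.2) (fun q => conj q.1) hF hH
        rw [h1, hv, hE0c, mul_zero]
        simp
    · -- (C, C)
      have h1 : (fun ω => auxX G (Sum.inr (Sum.inr p)) ω * conj (auxX G (Sum.inr (Sum.inr p')) ω))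
          = fun ω => (conj (G (Sum.inr p.1) ω) * G (Sum.inr p'.1) ω)
              * (G (Sum.inl p) ω * conj (G (Sum.inl p') ω)) := by
        funext ω; simp; ring
      have hF : Measurable fun q : ℂ × ℂ => conj q.1 * q.2 :=
        (mconj.comp measurable_fst).mul measurable_snd
      have hH : Measurable fun q : ℂ × ℂ => q.1 * conj q.2 :=
        measurable_fst.mul (mconj.comp measurable_snd)
      refine ⟨?_, ?_⟩
      · rw [h1]
        exact key22I (Sum.inr p.1) (Sum.inr p'.1) (Sum.inl p) (Sum.inl p') (by simp) (by simp) (by simp) (by simp)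
          (fun q => conj q.1 * q.2) (fun q => q.1 * conj q.2) hF hH (hIprod' _ _) (hIprod _ _)
      · have hv : ∫ ω, (conj (G (Sum.inr p.1) ω) * G (Sum.inr p'.1) ω)
              * (G (Sum.inl p) ω * conj (G (Sum.inl p') ω)) ∂μ
            = (∫ ω, conj (G (Sum.inr p.1) ω) * G (Sum.inr p'.1) ω ∂μ)
              * ∫ ω, G (Sum.inl p) ω * conj (G (Sum.inl p') ω) ∂μ :=
          key22V (Sum.inr p.1) (Sum.inr p'.1) (Sum.inl p) (Sum.inl p') (by simp) (by simp) (by simp) (by simp)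
            (fun q => conj q.1 * q.2) (fun q => q.1 * conj q.2) hF hH
        rw [h1, hv, hVprod', hVprod]
        by_cases h : p = p'
        · subst h
          simp only [eq_self_iff_true, if_true, auxv_inrr]
          push_cast
          ring
        · rw [if_neg (fun hh : (Sum.inl p : (Fin N × Fin M) ⊕ Fin N) = Sum.inl p' =>
            h (Sum.inl.inj hh)), mul_zero, if_neg (fun hh => h (by
              injection (Sum.inr.inj hh)))]
  -- assemble the sum
  have hSum : ∀ ω, (∑ i, c i * conj (G (Sum.inr i) ω)
      + (∑ p, d p * G (Sum.inl p) ω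
      + ∑ p, e p * (conj (G (Sum.inr p.1) ω) * G (Sum.inl p) ω)))
      = ∑ t : TIdx N M, auxa c d e t * auxX G t ω := fun ω => by
    rw [Fintype.sum_sum_type, Fintype.sum_sum_type]
    simp
  have hInt2 : ∀ t t' : TIdx N M, Integrable (fun ω =>
      (auxa c d e t * conj (auxa c d e t')) * (auxX G t ω * conj (auxX G t' ω))) μ :=
    fun t t' => (claim t t').1.const_mul _
  have hprod : ∀ ω, (∑ t : TIdx N M, auxa c d e t * auxX G t ω)
      * conj (∑ t' : TIdx N M, auxa c d e t' * auxX G t' ω)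
      = ∑ t : TIdx N M, ∑ t' : TIdx N M,
          (auxa c d e t * conj (auxa c d e t')) * (auxX G t ω * conj (auxX G t' ω)) := fun ω => by
    rw [map_sum, Finset.sum_mul_sum]
    exact Finset.sum_congr rfl fun t _ => Finset.sum_congr rfl fun t' _ => by
      rw [_root_.map_mul]; ring
  have hCint : ∫ ω, (∑ t : TIdx N M, auxa c d e t * auxX G t ω)
        * conj (∑ t' : TIdx N M, auxa c d e t' * auxX G t' ω) ∂μ
      = ((∑ t : TIdx N M, Complex.normSq (auxa c d e t) * auxv N M σε t : ℝ) : ℂ) := by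
    rw [integral_congr_ae (Filter.Eventually.of_forall hprod)]
    rw [integral_finset_sum _ (fun t _ => integrable_finset_sum _ (fun t' _ => hInt2 t t'))]
    have step1 : ∀ t : TIdx N M, ∫ ω, (∑ t' : TIdx N M,
        (auxa c d e t * conj (auxa c d e t')) * (auxX G t ω * conj (auxX G t' ω))) ∂μ
        = (auxa c d e t * conj (auxa c d e t)) * ((auxv N M σε t : ℝ) : ℂ) := by
      intro t
      rw [integral_finset_sum _ (fun t' _ => hInt2 t t')]
      have step2 : ∀ t' : TIdx N M, ∫ ω,
          (auxa c d e t * conj (auxa c d e t')) * (auxX G t ω * conj (auxX G t' ω)) ∂μ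
          = (auxa c d e t * conj (auxa c d e t'))
            * (if t = t' then ((auxv N M σε t : ℝ) : ℂ) else 0) := fun t' => by
        rw [integral_const_mul, (claim t t').2]
      rw [Finset.sum_congr rfl fun t' _ => step2 t']
      rw [Finset.sum_eq_single t (fun b _ hb => by
        rw [if_neg (fun h => hb h.symm), mul_zero]) (fun h => absurd (Finset.mem_univ t) h)]
      rw [if_pos rfl]
    rw [Finset.sum_congr rfl fun t _ => step1 t]
    push_cast
    exact Finset.sum_congr rfl fun t _ => by rw [Complex.mul_conj]
  -- move to the reals
  have hL : ((∫ ω, ‖∑ i, c i * conj (G (Sum.inr i) ω)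
      + (∑ p, d p * G (Sum.inl p) ω
      + ∑ p, e p * (conj (G (Sum.inr p.1) ω) * G (Sum.inl p) ω))‖ ^ 2 ∂μ : ℝ) : ℂ)
      = ((∑ t : TIdx N M, Complex.normSq (auxa c d e t) * auxv N M σε t : ℝ) : ℂ) := by
    rw [← integral_cpx_ofReal]
    rw [show (fun ω => ((‖∑ i, c i * conj (G (Sum.inr i) ω)
        + (∑ p, d p * G (Sum.inl p) ω
        + ∑ p, e p * (conj (G (Sum.inr p.1) ω) * G (Sum.inl p) ω))‖ ^ 2 : ℝ) : ℂ))
        = fun ω => (∑ t : TIdx N M, auxa c d e t * auxX G t ω)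
          * conj (∑ t' : TIdx N M, auxa c d e t' * auxX G t' ω) from funext fun ω => by
      rw [hSum ω, Complex.sq_norm, Complex.mul_conj]]
    exact hCint
  have hLr := Complex.ofReal_inj.mp hL
  rw [hLr]
  rw [Fintype.sum_sum_type, Fintype.sum_sum_type]
  simp only [auxa_inl, auxa_inrl, auxa_inrr, auxv_inl, auxv_inrl, auxv_inrr,
    Complex.normSq_eq_norm_sq]
  rw [← Finset.sum_mul, ← Finset.sum_mul, ← Finset.sum_mul]
  ring


end Helpers

/-- Variance of the residual error term under imperfect CSI. -/
theorem icsi_residual_error_variance (N M : ℕ) (σε : ℝ) (hσε : 0 < σε)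
    {Ω : Type*} [MeasurableSpace Ω] (μ : Measure Ω) [IsProbabilityMeasure μ]
    (Lam : Ω → Matrix (Fin N) (Fin M) ℂ) (lam : Ω → Fin N → ℂ)
    (g : (Fin N × Fin M) ⊕ Fin N → Ω → ℂ)
    (hg : g = Sum.elim (fun ij ω => Lam ω ij.1 ij.2) (fun i ω => lam ω i))
    (hindep : iIndepFun g μ)
    (hL2 : ∀ idx, MemLp (g idx) 2 μ)
    (hmean : ∀ idx, ∫ ω, g idx ω ∂μ = 0)
    (hvar : ∀ idx, ∫ ω, ‖g idx ω‖ ^ 2 ∂μ = σε ^ 2)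
    (φ : Fin N → ℂ) (hφ : ∀ i, ‖φ i‖ = 1)
    (Hhat : Matrix (Fin N) (Fin M) ℂ) (hhat : Fin N → ℂ) (f : Fin M → ℂ) :
    ∫ ω, ‖
        (star (lam ω) ⬝ᵥ (Matrix.diagonal φ).mulVec (Hhat.mulVec f) +
         star hhat ⬝ᵥ (Matrix.diagonal φ).mulVec ((Lam ω).mulVec f) +
         star (lam ω) ⬝ᵥ (Matrix.diagonal φ).mulVec ((Lam ω).mulVec f))‖ ^ 2 ∂μ
      = σε ^ 2 * ((∑ i, ‖hhat i‖ ^ 2) * (∑ j, ‖f j‖ ^ 2) +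
            ∑ i, ‖Hhat.mulVec f i‖ ^ 2) +
        N * σε ^ 4 * ∑ j, ‖f j‖ ^ 2 := by
  classical
  -- measurable modification of g
  have hae : ∀ idx, AEMeasurable (g idx) μ := fun idx => (hL2 idx).aestronglyMeasurable.aemeasurable
  set G : (Fin N × Fin M) ⊕ Fin N → Ω → ℂ := fun idx => (hae idx).mk (g idx) with hGdef
  have hGmeas : ∀ idx, Measurable (G idx) := fun idx => (hae idx).measurable_mk
  have hGae : ∀ idx, g idx =ᵐ[μ] G idx := fun idx => (hae idx).ae_eq_mk
  have hGindep : iIndepFun G μ := myIndep_ae hindep hGae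
  have hGL2 : ∀ idx, MemLp (G idx) 2 μ := fun idx => (hL2 idx).ae_eq (hGae idx)
  have hGmean : ∀ idx, ∫ ω, G idx ω ∂μ = 0 := fun idx =>
    (integral_congr_ae (hGae idx)).symm.trans (hmean idx)
  have hGvar : ∀ idx, ∫ ω, ‖G idx ω‖ ^ 2 ∂μ = σε ^ 2 := fun idx =>
    (integral_congr_ae ((hGae idx).fun_comp fun z => ‖z‖ ^ 2)).symm.trans (hvar idx)
  -- coefficients
  set c : Fin N → ℂ := fun i => φ i * Hhat.mulVec f i with hc
  set d : Fin N × Fin M → ℂ := fun p => conj (hhat p.1) * φ p.1 * f p.2 with hd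
  set e : Fin N × Fin M → ℂ := fun p => φ p.1 * f p.2 with he
  -- pointwise rewrite of the integrand in terms of g
  have horig : ∀ ω,
      star (lam ω) ⬝ᵥ (Matrix.diagonal φ).mulVec (Hhat.mulVec f) +
        star hhat ⬝ᵥ (Matrix.diagonal φ).mulVec ((Lam ω).mulVec f) +
        star (lam ω) ⬝ᵥ (Matrix.diagonal φ).mulVec ((Lam ω).mulVec f)
      = ∑ i, c i * conj (g (Sum.inr i) ω)
        + (∑ p, d p * g (Sum.inl p) ω
        + ∑ p, e p * (conj (g (Sum.inr p.1) ω) * g (Sum.inl p) ω)) := by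
    intro ω
    have hglam : ∀ i, g (Sum.inr i) ω = lam ω i := fun i => by rw [hg]; rfl
    have hgLam : ∀ p : Fin N × Fin M, g (Sum.inl p) ω = Lam ω p.1 p.2 := fun p => by rw [hg]; rfl
    have hmv : ∀ (A : Matrix (Fin N) (Fin M) ℂ) (i : Fin N), A.mulVec f i = ∑ j, A i j * f j :=
      fun A i => rfl
    simp only [hc, hd, he, hglam, hgLam, Fintype.sum_prod_type]
    simp only [dotProduct, Matrix.mulVec_diagonal, Pi.star_apply, RCLike.star_def]
    rw [add_assoc]
    congr 1
    · exact Finset.sum_congr rfl fun i _ => by ring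
    congr 1
    · simp only [hmv, Finset.mul_sum]
      exact Finset.sum_congr rfl fun i _ => Finset.sum_congr rfl fun j _ => by ring
    · simp only [hmv, Finset.mul_sum]
      exact Finset.sum_congr rfl fun i _ => Finset.sum_congr rfl fun j _ => by ring
  -- replace g by G almost everywhere
  have hptwise : (fun ω => ‖star (lam ω) ⬝ᵥ (Matrix.diagonal φ).mulVec (Hhat.mulVec f) +
         star hhat ⬝ᵥ (Matrix.diagonal φ).mulVec ((Lam ω).mulVec f) +
         star (lam ω) ⬝ᵥ (Matrix.diagonal φ).mulVec ((Lam ω).mulVec f)‖ ^ 2)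
      =ᵐ[μ] fun ω => ‖∑ i, c i * conj (G (Sum.inr i) ω)
        + (∑ p, d p * G (Sum.inl p) ω
        + ∑ p, e p * (conj (G (Sum.inr p.1) ω) * G (Sum.inl p) ω))‖ ^ 2 := by
    have hall : ∀ᵐ ω ∂μ, ∀ idx, g idx ω = G idx ω := ae_all_iff.mpr hGae
    filter_upwards [hall] with ω hω
    rw [horig ω]
    simp only [hω]
  rw [integral_congr_ae hptwise]
  rw [aux N M σε G hGmeas hGindep hGL2 hGmean hGvar c d e]
  -- final arithmetic
  have h1 : ∀ i, ‖c i‖ ^ 2 = ‖Hhat.mulVec f i‖ ^ 2 := fun i => by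
    rw [hc]; simp only [norm_mul, mul_pow, hφ i, one_pow, one_mul]
  have h2 : ∑ p : Fin N × Fin M, ‖d p‖ ^ 2
      = (∑ i, ‖hhat i‖ ^ 2) * ∑ j, ‖f j‖ ^ 2 := by
    rw [Fintype.sum_prod_type, Finset.sum_mul_sum]
    refine Finset.sum_congr rfl fun i _ => Finset.sum_congr rfl fun j _ => ?_
    rw [hd]
    simp only [norm_mul, mul_pow, hφ i, Complex.norm_conj, one_pow]
    ring
  have h3 : ∑ p : Fin N × Fin M, ‖e p‖ ^ 2 = N * ∑ j, ‖f j‖ ^ 2 := by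
    rw [Fintype.sum_prod_type]
    have hrow : ∀ i : Fin N, ∑ j, ‖e (i, j)‖ ^ 2 = ∑ j, ‖f j‖ ^ 2 :=
      fun i => Finset.sum_congr rfl fun j _ => by
        rw [he]; simp only [norm_mul, mul_pow, hφ i, one_pow, one_mul]
    rw [Finset.sum_congr rfl fun i _ => hrow i, Finset.sum_const, Finset.card_univ,
      Fintype.card_fin, nsmul_eq_mul]
  rw [Finset.sum_congr rfl fun i _ => h1 i, h2, h3]
  ring
end
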